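/- For all N ≥ 2: p_n^(N) is a positive integer for every 2 ≤ n ≤ N; lim_{N→∞} p_2^(N) = ∞; and for every fixed n ≥ 2, lim_{N→∞} p_{n+1}^(N) / p_n^(N) = ∞. -/

import Mathlib

open Filter Topology

namespace SSRG

/-- The integer-valued field recording the coefficient with which the noise
variable `x₀` (placed at scale `N+1` at time `0`) enters the level-`N`
regularized solution of the phase model `uₙ(t) = 2uₙ(t-τₙ) + 2u_{n+1}(t-τₙ)`.
Here `q n m` stands for `qₙ^{(N)}(m·τₙ)`. -/
def QField (N : ℕ) (q : ℕ → ℕ → ℤ) : Prop :=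
  (∀ n, 1 ≤ n → n ≤ N → q n 0 = 0) ∧
  (q (N + 1) 0 = 1) ∧
  (∀ m, 1 ≤ m → q (N + 1) m = 0) ∧
  (∀ n, N + 1 < n → ∀ m, q n m = 0) ∧
  (∀ n m, 1 ≤ n → n ≤ N → 1 ≤ m →
    q n m = 2 * q n (m - 1) + 2 * q (n + 1) (2 * (m - 1)))

def s : ℕ → ℕ → ℤ
  | 0, 0 => 1
  | 0, _+1 => 0
  | _+1, 0 => 0
  | d+1, m+1 => 2 * s (d+1) m + 2 * s d (2*m)
termination_by d m => (d, m)

lemma s_rec (d m : ℕ) : s (d+1) (m+1) = 2 * s (d+1) m + 2 * s d (2*m) := by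
  rw [s]

lemma s_nonneg : ∀ d m, 0 ≤ s d m := by
  intro d
  induction d with
  | zero => intro m; cases m <;> simp [s]
  | succ d ih =>
    intro m
    induction m with
    | zero => simp [s]
    | succ m ihm =>
      have := ih (2*m)
      rw [s_rec]; linarith

lemma s_zero_eq (m : ℕ) (hm : 1 ≤ m) : s 0 m = 0 := by
  cases m with
  | zero => omega
  | succ k => simp [s]

lemma s_one_eq (m : ℕ) (hm : 1 ≤ m) : s 1 m = 2 ^ m := by
  induction m with
  | zero => omega
  | succ m ih =>
    rcases Nat.eq_zero_or_pos m with rfl | hm1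
    · show s 1 1 = 2^1
      rw [s_rec]
      norm_num [s]
    · rw [s_rec, ih hm1, s_zero_eq (2*m) (by omega)]
      ring

lemma s_m_one (d : ℕ) (hd : 2 ≤ d) : s d 1 = 0 := by
  obtain ⟨k, rfl⟩ : ∃ k, d = k + 2 := ⟨d - 2, by omega⟩
  rw [s_rec]
  norm_num [s]

lemma s_two (d : ℕ) (hd : 1 ≤ d) : s d 2 = 2 ^ (d+1) := by
  induction d with
  | zero => omega
  | succ d ih =>
    rcases Nat.eq_zero_or_pos d with rfl | hd1
    · rw [show (2:ℕ) = 1 + 1 from rfl, s_rec, s_one_eq 1 le_rfl]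
      norm_num [s]
    · rw [show (2:ℕ) = 1 + 1 from rfl, s_rec, s_m_one (d+1) (by omega)]
      rw [show 2*1 = 2 from rfl, ih hd1]
      ring

/-- Key growth inequality. -/
lemma s_growth : ∀ d, 1 ≤ d → ∀ m, 1 ≤ m → 2 ^ d * s d m ≤ s d (m+1) := by
  intro d
  induction d with
  | zero => omega
  | succ d ih =>
    intro _ m
    induction m with
    | zero => omega
    | succ m ihm =>
      intro _
      have e1 : s (d+1) (m+1+1) = 2 * s (d+1) (m+1) + 2 * s d (2*(m+1)) := s_rec d (m+1)
      have e2 : s (d+1) (m+1) = 2 * s (d+1) m + 2 * s d (2*m) := s_rec d m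
      rcases Nat.eq_zero_or_pos d with rfl | hd
      · -- level 1
        have z1 : s 0 (2*(m+1)) = 0 := s_zero_eq _ (by omega)
        rcases Nat.eq_zero_or_pos m with rfl | hm
        · have : s 1 (0+1) = 2 * s 1 0 + 2 * s 0 0 := s_rec 0 0
          have h0 : s 1 0 = 0 := by norm_num [s]
          have h00 : s 0 0 = 1 := by norm_num [s]
          have h2 : (0:ℤ) ≤ s 1 (0+1+1) := s_nonneg 1 2
          norm_num at e1 z1 this ⊢
          linarith
        · have z0 : s 0 (2*m) = 0 := s_zero_eq _ (by omega)
          rw [e1, e2, z0, z1]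
          ring_nf
          nlinarith [s_nonneg 1 m]
      · rcases Nat.eq_zero_or_pos m with rfl | hm
        · -- base m = 1
          have hz : s (d+1) (0+1) = 0 := s_m_one (d+1) (by omega)
          have h2 : (0:ℤ) ≤ s (d+1) (0+1+1) := s_nonneg (d+1) 2
          rw [hz]
          linarith
        · have h1 : 2 ^ (d+1) * s (d+1) m ≤ s (d+1) (m+1) := ihm (by omega)
          have h2 : 2 ^ d * s d (2*m) ≤ s d (2*m+1) := ih hd (2*m) (by omega)
          have h3 : 2 ^ d * s d (2*m+1) ≤ s d (2*m+2) := ih hd (2*m+1) (by omega)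
          have h4 : 0 ≤ s d (2*m) := s_nonneg d (2*m)
          have h5 : (2:ℤ) ≤ 2 ^ d := by
            calc (2:ℤ) = 2^1 := by norm_num
            _ ≤ 2^d := by apply pow_le_pow_right₀ <;> omega
          have h2' : 2 ^ d * (2 ^ d * s d (2*m)) ≤ 2 ^ d * s d (2*m+1) :=
            mul_le_mul_of_nonneg_left h2 (by positivity)
          have hprod : 0 ≤ 2^d * ((2^d - 2) * s d (2*m)) :=
            mul_nonneg (by positivity) (mul_nonneg (by linarith) h4)
          have h6 : 2 ^ (d+1) * s d (2*m) ≤ s d (2*(m+1)) := by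
            have hh : 2*(m+1) = 2*m+2 := by ring
            rw [hh]
            ring_nf; ring_nf at h2' hprod h3; nlinarith
          have key : 2^(d+1) * s (d+1) (m+1) = 2*(2^(d+1) * s (d+1) m) + 2*(2^(d+1) * s d (2*m)) := by
            rw [e2]; ring
          have h1' : 2*(2^(d+1) * s (d+1) m) ≤ 2 * s (d+1) (m+1) := by linarith
          -- want: 2^(d+1) * s (d+1)(m+1) ≤ s (d+1)(m+2)
          rw [e1, key]
          linarith

lemma s_pos (d : ℕ) (hd : 1 ≤ d) : ∀ m, 2 ≤ m → 0 < s d m := by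
  intro m
  induction m with
  | zero => omega
  | succ m ihm =>
    intro hm
    rcases Nat.lt_or_ge m 2 with h | h
    · have : m = 1 := by omega
      subst this
      rw [s_two d hd]
      positivity
    · have h1 : 0 < s d m := ihm h
      have h2 : 2 ^ d * s d m ≤ s d (m+1) := s_growth d hd m (by omega)
      have h5 : (1:ℤ) ≤ 2 ^ d := one_le_pow₀ (by norm_num)
      nlinarith


lemma q_eq_s (q : ℕ → ℕ → ℤ) (N : ℕ) (hq : QField N q) :
    ∀ d, d ≤ N → ∀ m, q (N + 1 - d) m = s d m := by
  intro d
  induction d with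
  | zero =>
    intro _ m
    simp only [Nat.sub_zero]
    cases m with
    | zero => rw [hq.2.1]; norm_num [s]
    | succ k => rw [hq.2.2.1 (k+1) (by omega)]; simp [s]
  | succ d ih =>
    intro hdN m
    have hn1 : 1 ≤ N + 1 - (d+1) := by omega
    have hn2 : N + 1 - (d+1) ≤ N := by omega
    induction m with
    | zero => rw [hq.1 _ hn1 hn2]; simp [s]
    | succ m ihm =>
      have hrec := hq.2.2.2.2 (N + 1 - (d+1)) (m+1) hn1 hn2 (by omega)
      have hnext : N + 1 - (d+1) + 1 = N + 1 - d := by omega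
      rw [hrec]
      simp only [Nat.add_sub_cancel, hnext]
      rw [ihm, ih (by omega) (2*m), s_rec]

lemma key_ineq (k m : ℕ) (hk : 1 ≤ k) (hm : 1 ≤ m) :
    ((2:ℤ) ^ k - 1) * s (k+1) m ≤ s k (2*m) := by
  have e := s_rec k m
  have h := s_growth (k+1) (by omega) m hm
  have hnn : 0 ≤ s (k+1) m := s_nonneg _ _
  have : (2:ℤ)^(k+1) = 2 * 2^k := by ring
  nlinarith [s_nonneg k (2*m)]

/-- With `p_n^{(N)} = q_n^{(N)}(1/2) = q N n (2^(n-1))`: for all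
`N ≥ 2`, `p_n^{(N)}` is a positive integer for every `2 ≤ n ≤ N`;
`lim_{N→∞} p₂^{(N)} = ∞`; and for every fixed `n ≥ 2`,
`lim_{N→∞} p_{n+1}^{(N)} / p_n^{(N)} = ∞`. -/
theorem statement13 (q : ℕ → ℕ → ℕ → ℤ) (hq : ∀ N, 2 ≤ N → QField N (q N)) :
    (∀ N, 2 ≤ N → ∀ n, 2 ≤ n → n ≤ N → 0 < q N n (2 ^ (n - 1))) ∧
    Tendsto (fun N => q N 2 (2 ^ 1)) atTop atTop ∧
    (∀ n, 2 ≤ n →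
      Tendsto (fun N => (q N (n + 1) (2 ^ n) : ℝ) / (q N n (2 ^ (n - 1)) : ℝ))
        atTop atTop) := by
  have htrans : ∀ N, 2 ≤ N → ∀ n, 1 ≤ n → n ≤ N + 1 → ∀ m, q N n m = s (N + 1 - n) m := by
    intro N hN n h1 h2 m
    have := q_eq_s (q N) N (hq N hN) (N + 1 - n) (by omega) m
    rwa [show N + 1 - (N + 1 - n) = n by omega] at this
  refine ⟨?_, ?_, ?_⟩
  · intro N hN n hn2 hnN
    rw [htrans N hN n (by omega) (by omega)]
    exact s_pos (N + 1 - n) (by omega) (2 ^ (n-1))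
      (by calc 2 = 2^1 := rfl
          _ ≤ 2^(n-1) := Nat.pow_le_pow_right (by norm_num) (by omega))
  · apply tendsto_atTop_mono' atTop ?_ tendsto_natCast_atTop_atTop
    filter_upwards [eventually_ge_atTop 2] with N hN
    rw [htrans N hN 2 (by omega) (by omega)]
    rw [show (2:ℕ)^1 = 2 from rfl, s_two (N+1-2) (by omega), show N + 1 - 2 + 1 = N by omega]
    have := Nat.lt_two_pow_self (n := N)
    calc (N:ℤ) ≤ ((2^N : ℕ) : ℤ) := by exact_mod_cast this.le
    _ = 2^N := by push_cast; ring
  · intro n hn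
    have hg : Tendsto (fun N : ℕ => (N:ℝ) + (-(n:ℝ))) atTop atTop :=
      tendsto_atTop_add_const_right atTop _ tendsto_natCast_atTop_atTop
    apply tendsto_atTop_mono' atTop ?_ hg
    filter_upwards [eventually_ge_atTop (n+1)] with N hN
    have hNn : 2 ≤ N := by omega
    set k := N - n with hk
    have hk1 : 1 ≤ k := by omega
    have hnum : q N (n+1) (2^n) = s k (2 * 2^(n-1)) := by
      rw [htrans N hNn (n+1) (by omega) (by omega), show N + 1 - (n+1) = k by omega,
        show 2 * 2^(n-1) = 2^n by rw [← pow_succ']; congr 1; omega]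
    have hden : q N n (2^(n-1)) = s (k+1) (2^(n-1)) := by
      rw [htrans N hNn n (by omega) (by omega), show N + 1 - n = k + 1 by omega]
    have hm2 : 2 ≤ 2^(n-1) := by
      calc 2 = 2^1 := rfl
      _ ≤ 2^(n-1) := Nat.pow_le_pow_right (by norm_num) (by omega)
    have hdpos : 0 < s (k+1) (2^(n-1)) := s_pos (k+1) (by omega) _ hm2
    have hineq := key_ineq k (2^(n-1)) hk1 (by omega)
    rw [hnum, hden]
    have hdposR : (0:ℝ) < ((s (k+1) (2^(n-1)) : ℤ) : ℝ) := by exact_mod_cast hdpos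
    rw [le_div_iff₀ hdposR]
    have hc1 : ((N:ℝ) + (-(n:ℝ))) ≤ ((2^k - 1 : ℤ) : ℝ) := by
      have h2 : (k:ℤ) ≤ 2^k - 1 := by
        have := Nat.lt_two_pow_self (n := k)
        have : (k:ℤ) < ((2^k : ℕ) : ℤ) := by exact_mod_cast this
        push_cast at this
        omega
      have h3 : ((k:ℝ)) ≤ ((2^k - 1 : ℤ) : ℝ) := by exact_mod_cast h2
      have h4 : (N:ℝ) + (-(n:ℝ)) = (k:ℝ) := by
        rw [hk]
        push_cast [Nat.cast_sub (by omega : n ≤ N)]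
        ring
      linarith
    calc ((N:ℝ) + (-(n:ℝ))) * ((s (k+1) (2^(n-1)) : ℤ) : ℝ)
        ≤ ((2^k - 1 : ℤ) : ℝ) * ((s (k+1) (2^(n-1)) : ℤ) : ℝ) :=
          mul_le_mul_of_nonneg_right hc1 hdposR.le
      _ ≤ ((s k (2 * 2^(n-1)) : ℤ) : ℝ) := by exact_mod_cast hineq

end SSRG
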